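/- Suppose S ⊆ μ⁺ ∩ cof(μ) is stationary and (S_α)_{α ∈ S} is a disjoint stationary sequence on μ⁺. Then the approachability property AP_μ fails, i.e., μ⁺ ∉ I[μ⁺]. -/

import Mathlib

open Cardinal

universe u

/-- `[X]^{<κ}`: the subsets of `X` of cardinality `< κ`. -/
def SmallSets {α : Type u} (κ : Cardinal.{u}) (X : Set α) : Set (Set α) :=
  {a | a ⊆ X ∧ #a < κ}

/-- `C` is club in `[X]^{<κ}`: it consists of `<κ`-sized subsets of `X`, is cofinal
under `⊆`, and is closed under unions of `⊆`-increasing chains of length `< κ`. -/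
def IsClubIn {α : Type u} (κ : Cardinal.{u}) (X : Set α) (C : Set (Set α)) : Prop :=
  C ⊆ SmallSets κ X ∧
  (∀ a ∈ SmallSets κ X, ∃ b ∈ C, a ⊆ b) ∧
  (∀ (ι : Type u) [LinearOrder ι], Nonempty ι → #ι < κ →
    ∀ f : ι → Set α, Monotone f → (∀ i, f i ∈ C) → (⋃ i, f i) ∈ C)

/-- `S` is stationary in `[X]^{<κ}`: it meets every club subset of `[X]^{<κ}`. -/
def IsStationaryIn {α : Type u} (κ : Cardinal.{u}) (X : Set α) (S : Set (Set α)) : Prop :=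
  S ⊆ SmallSets κ X ∧ ∀ C, IsClubIn κ X C → (S ∩ C).Nonempty

/-- The order type of a set in a well-ordered type. -/
noncomputable def otp {β : Type u} [LinearOrder β] [WellFoundedLT β] (E : Set β) :
    Ordinal.{u} :=
  Ordinal.type ((· < ·) : E → E → Prop)

/-- `C` is club in the ordinal `Λ`: `C ⊆ Λ`, `C` is unbounded in `Λ` and closed. -/
def ClubInOrd (Λ : Ordinal.{0}) (C : Set Ordinal.{0}) : Prop :=
  C ⊆ Set.Iio Λ ∧ (∀ β < Λ, ∃ γ ∈ C, β ≤ γ) ∧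
  ∀ β < Λ, Order.IsSuccLimit β → (∀ γ < β, ∃ δ ∈ C, γ ≤ δ ∧ δ < β) → β ∈ C

/-- `S` is stationary in the ordinal `Λ`. -/
def StationaryInOrd (Λ : Ordinal.{0}) (S : Set Ordinal.{0}) : Prop :=
  S ⊆ Set.Iio Λ ∧ ∀ C, ClubInOrd Λ C → (S ∩ C).Nonempty

/-- `γ` is approachable with respect to the sequence `(a α)`: there is `E ⊆ γ`
unbounded in `γ` of order type `cf γ` all of whose proper initial segments appear
among `{a α | α < γ}`. -/
def ApproachablePt (a : Ordinal.{0} → Set Ordinal.{0}) (γ : Ordinal.{0}) : Prop :=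
  ∃ E : Set Ordinal.{0}, E ⊆ Set.Iio γ ∧ (∀ β < γ, ∃ δ ∈ E, β ≤ δ) ∧
    otp E = Ordinal.lift.{1} γ.cof.ord ∧
    ∀ β < γ, ∃ α < γ, E ∩ Set.Iio β = a α


section Aux

/-- Extract an enumeration from an order type computation. -/
lemma mkEnum (E : Set Ordinal.{0}) (ν : Ordinal.{0}) (h : otp E = Ordinal.lift.{1,0} ν) :
    ∃ e : Ordinal.{0} → Ordinal.{0}, (∀ ρ < ν, e ρ ∈ E) ∧
      (∀ ρ < ν, ∀ ρ' < ν, ρ < ρ' → e ρ < e ρ') ∧ (∀ u ∈ E, ∃ ρ < ν, e ρ = u) := by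
  have h2 : Ordinal.lift.{0} (Ordinal.type ((· < ·) : E → E → Prop))
      = Ordinal.lift.{1} (@Ordinal.type ν.ToType (· < ·) isWellOrder_lt) := by
    rw [Ordinal.lift_uzero, Ordinal.type_toType]
    exact h
  obtain ⟨g⟩ := (@Ordinal.lift_type_eq.{1,0,0} ↥E ν.ToType _ _ inferInstance isWellOrder_lt).mp h2
  refine ⟨fun ρ => if hρ : ρ < ν then (g.symm ((Ordinal.ToType.mk (o := ν)) ⟨ρ, hρ⟩)).1 else 0,
    ?_, ?_, ?_⟩
  · intro ρ hρ
    simp only [hρ, dif_pos]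
    exact (g.symm _).2
  · intro ρ hρ ρ' hρ' hlt
    simp only [hρ, hρ', dif_pos]
    have h1 : (Ordinal.ToType.mk (o := ν)) ⟨ρ, hρ⟩ < (Ordinal.ToType.mk (o := ν)) ⟨ρ', hρ'⟩ := by
      rw [OrderIso.lt_iff_lt]
      exact hlt
    exact g.symm.map_rel_iff.mpr h1
  · intro u hu
    set ρ := (Ordinal.ToType.mk (o := ν)).symm (g ⟨u, hu⟩) with hρdef
    have hρ : ρ.1 < ν := ρ.2
    refine ⟨ρ.1, hρ, ?_⟩
    beta_reduce
    rw [dif_pos hρ]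
    have h3 : (⟨ρ.1, hρ⟩ : Set.Iio ν) = ρ := rfl
    rw [h3, hρdef, OrderIso.apply_symm_apply, RelIso.symm_apply_apply]

/-- Iterating a step function below an ordinal of uncountable cofinality. -/
lemma seq_lemma {Λ : Ordinal.{0}} (hΛ : ℵ₀ < Λ.cof) (step : Ordinal.{0} → Ordinal.{0})
    (hstep : ∀ δ < Λ, δ < step δ ∧ step δ < Λ) (β₀ : Ordinal.{0}) (hβ₀ : β₀ < Λ) :
    ∃ ε, ε < Λ ∧ β₀ ≤ ε ∧ Order.IsSuccLimit ε ∧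
      (∀ γ < ε, ∃ n : ℕ, γ < step^[n] β₀) ∧
      (∀ n : ℕ, step^[n] β₀ < Λ) ∧ (∀ n : ℕ, step^[n] β₀ < ε) := by
  have hΛlim : Order.IsSuccLimit Λ := Ordinal.aleph0_le_cof.mp hΛ.le
  set seq : ℕ → Ordinal.{0} := fun n => step^[n] β₀ with hseq
  have hseqΛ : ∀ n, seq n < Λ := by
    intro n; induction n with
    | zero => exact hβ₀
    | succ n ih =>
      have : seq (n+1) = step (seq n) := Function.iterate_succ_apply' step n β₀
      rw [this]; exact (hstep _ ih).2
  have hmono : ∀ n, seq n < seq (n + 1) := by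
    intro n
    have : seq (n+1) = step (seq n) := Function.iterate_succ_apply' step n β₀
    rw [this]; exact (hstep _ (hseqΛ n)).1
  have hbdd : BddAbove (Set.range seq) := ⟨Λ, by rintro _ ⟨n, rfl⟩; exact (hseqΛ n).le⟩
  set ε := ⨆ n, seq n with hε
  have hle : ∀ n, seq n ≤ ε := fun n => le_ciSup hbdd n
  have hεΛ : ε < Λ := Ordinal.iSup_lt_ord (by rw [Cardinal.mk_nat]; exact hΛ) hseqΛ
  have hex : ∀ γ < ε, ∃ n, γ < seq n := by
    intro γ hγ
    by_contra hcon
    push_neg at hcon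
    exact absurd (ciSup_le hcon) (not_le.mpr hγ)
  have hlt : ∀ n, seq n < ε := fun n => (hmono n).trans_le (hle (n+1))
  refine ⟨ε, hεΛ, hle 0, ⟨?_, ?_⟩, hex, hseqΛ, hlt⟩
  · intro h0
    exact h0.not_lt ((hmono 0).trans_le (hle 1))
  · rw [Order.isSuccPrelimit_iff_succ_lt]
    intro a ha
    obtain ⟨n, hn⟩ := hex a ha
    exact lt_of_le_of_lt (Order.succ_le_of_lt hn) (lt_of_lt_of_le (hmono n) (hle (n+1)))

/-- The intersection of two clubs in an ordinal of uncountable cofinality is club. -/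
lemma clubInOrd_inter {Λ : Ordinal.{0}} (hΛ : ℵ₀ < Λ.cof) {C D : Set Ordinal.{0}}
    (hC : ClubInOrd Λ C) (hD : ClubInOrd Λ D) : ClubInOrd Λ (C ∩ D) := by
  have hΛlim : Order.IsSuccLimit Λ := Ordinal.aleph0_le_cof.mp hΛ.le
  have hsucc : ∀ β < Λ, β + 1 < Λ := by
    intro β hβ
    rw [Ordinal.add_one_eq_succ]
    exact hΛlim.succ_lt hβ
  have pick : ∀ (W : Set Ordinal.{0}), ClubInOrd Λ W →
      ∀ β, ∃ γ, β < Λ → (γ ∈ W ∧ β < γ ∧ γ < Λ) := by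
    intro W hW β
    by_cases hβ : β < Λ
    · obtain ⟨γ, hγW, hγ⟩ := hW.2.1 (β+1) (hsucc β hβ)
      exact ⟨γ, fun _ => ⟨hγW, lt_of_lt_of_le (lt_add_one β) hγ, hW.1 hγW⟩⟩
    · exact ⟨0, fun h => absurd h hβ⟩
  choose pc hpc using pick C hC
  choose pd hpd using pick D hD
  set step : Ordinal.{0} → Ordinal.{0} := fun β => pd (pc β) + 1 with hstepdef
  have hstep : ∀ δ < Λ, δ < step δ ∧ step δ < Λ := by
    intro δ hδ
    obtain ⟨h1, h2, h3⟩ := hpc δ hδ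
    obtain ⟨h4, h5, h6⟩ := hpd _ h3
    exact ⟨(h2.trans h5).trans (lt_add_one _), hsucc _ h6⟩
  refine ⟨fun δ hδ => hC.1 hδ.1, ?_, ?_⟩
  · intro β hβ
    obtain ⟨ε, hεΛ, hβε, hεlim, hex, hseqΛ, hseqε⟩ := seq_lemma hΛ step hstep β hβ
    refine ⟨ε, ⟨?_, ?_⟩, hβε⟩
    · apply hC.2.2 ε hεΛ hεlim
      intro γ hγ
      obtain ⟨n, hn⟩ := hex γ hγ
      obtain ⟨h1, h2, h3⟩ := hpc _ (hseqΛ n)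
      refine ⟨pc (step^[n] β), h1, (hn.trans h2).le, ?_⟩
      calc pc (step^[n] β) < step (step^[n] β) := (hpd _ h3).2.1.trans (lt_add_one _)
        _ = step^[n+1] β := (Function.iterate_succ_apply' step n β).symm
        _ < ε := hseqε (n+1)
    · apply hD.2.2 ε hεΛ hεlim
      intro γ hγ
      obtain ⟨n, hn⟩ := hex γ hγ
      obtain ⟨h1, h2, h3⟩ := hpc _ (hseqΛ n)
      obtain ⟨h4, h5, h6⟩ := hpd _ h3
      refine ⟨pd (pc (step^[n] β)), h4, (hn.trans (h2.trans h5)).le, ?_⟩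
      calc pd (pc (step^[n] β)) < step (step^[n] β) := lt_add_one _
        _ = step^[n+1] β := (Function.iterate_succ_apply' step n β).symm
        _ < ε := hseqε (n+1)
  · intro β hβ hβlim happrox
    exact ⟨hC.2.2 β hβ hβlim (fun γ hγ => let ⟨δ, hδ, h⟩ := happrox γ hγ; ⟨δ, hδ.1, h⟩),
      hD.2.2 β hβ hβlim (fun γ hγ => let ⟨δ, hδ, h⟩ := happrox γ hγ; ⟨δ, hδ.2, h⟩)⟩

/-- sup of a small family of ordinals below a regular cardinal's ordinal stays below. -/
lemma supLt {ι : Type 1} (g : ι → Ordinal.{0}) {c : Cardinal.{0}}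
    (hc : c.IsRegular) (hι : #ι < Cardinal.lift.{1,0} c) (hg : ∀ i, g i < c.ord) :
    (⨆ i, g i) < c.ord := by
  cases isEmpty_or_nonempty ι with
  | inl h =>
    rw [ciSup_of_empty]
    exact (Cardinal.ord_lt_ord.mpr (lt_of_lt_of_le (nat_lt_aleph0 0) hc.aleph0_le)).trans_le'
      (by simp)
  | inr h =>
    have key : (⨆ i, Ordinal.lift.{1,0} (g i)) < ((Cardinal.lift.{1,0} c).ord) := by
      apply Ordinal.iSup_lt_ord
      · have : (Cardinal.lift.{1,0} c).ord.cof = Cardinal.lift.{1,0} c := by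
          rw [← Cardinal.lift_ord, ← Ordinal.lift_cof, hc.cof_eq]
        rw [this]
        exact hι
      · intro i
        rw [← Cardinal.lift_ord]
        exact Ordinal.lift_lt.mpr (hg i)
    rw [← Cardinal.lift_ord] at key
    obtain ⟨b, hb⟩ := Ordinal.mem_range_lift_of_le (le_of_lt key)
    have hb2 : b < c.ord := by rw [← Ordinal.lift_lt.{1,0}, hb]; exact key
    refine lt_of_le_of_lt (ciSup_le fun i => ?_) hb2
    rw [← Ordinal.lift_le.{1,0}, hb]
    exact le_ciSup (f := fun i => Ordinal.lift.{1,0} (g i))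
      ⟨Ordinal.lift.{1,0} c.ord, by rintro _ ⟨i, rfl⟩; exact (Ordinal.lift_lt.mpr (hg i)).le⟩ i

/-- Closure points of a two-variable ordinal function form a club. -/
lemma clubInOrd_closure {c : Cardinal.{0}} (hc : c.IsRegular) (hunc : ℵ₀ < c)
    (ν : Ordinal.{0}) (hν : ν.card < c)
    (G : Ordinal.{0} → Ordinal.{0} → Ordinal.{0}) (hG : ∀ k j, G k j < c.ord) :
    ClubInOrd c.ord {δ | δ < c.ord ∧ ∀ k < δ, ∀ j < ν, G k j < δ} := by
  have hcof : c.ord.cof = c := hc.cof_eq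
  have hΛ : ℵ₀ < c.ord.cof := by rw [hcof]; exact hunc
  have hΛlim : Order.IsSuccLimit c.ord := Ordinal.aleph0_le_cof.mp hΛ.le
  have hsucc : ∀ β < c.ord, β + 1 < c.ord := by
    intro β hβ
    rw [Ordinal.add_one_eq_succ]
    exact hΛlim.succ_lt hβ
  set F : Ordinal.{0} → Ordinal.{0} :=
    fun δ => max (δ+1) (⨆ p : ↥(Set.Iio δ) × ↥(Set.Iio ν), (G p.1.1 p.2.1 + 1)) with hF
  have hFbdd : ∀ δ, BddAbove (Set.range
      (fun p : ↥(Set.Iio δ) × ↥(Set.Iio ν) => G p.1.1 p.2.1 + 1)) :=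
    fun δ => ⟨c.ord, by rintro _ ⟨p, rfl⟩; exact (hsucc _ (hG p.1.1 p.2.1)).le⟩
  have hF2 : ∀ δ < c.ord, F δ < c.ord := by
    intro δ hδ
    apply max_lt (hsucc δ hδ)
    apply supLt (fun p : ↥(Set.Iio δ) × ↥(Set.Iio ν) => G p.1.1 p.2.1 + 1) hc ?_
      (fun p => hsucc _ (hG p.1.1 p.2.1))
    rw [Cardinal.mk_prod, Ordinal.mk_Iio_ordinal, Ordinal.mk_Iio_ordinal,
      Cardinal.lift_lift, Cardinal.lift_lift]
    apply Cardinal.mul_lt_of_lt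
      (by rw [← Cardinal.lift_aleph0.{1,0}]; exact Cardinal.lift_le.mpr hunc.le)
    · exact Cardinal.lift_lt.mpr (Cardinal.lt_ord.mp hδ)
    · exact Cardinal.lift_lt.mpr hν
  have hstep : ∀ δ < c.ord, δ < F δ ∧ F δ < c.ord :=
    fun δ hδ => ⟨lt_max_of_lt_left (lt_add_one δ), hF2 δ hδ⟩
  have hFle : ∀ δ, ∀ k < δ, ∀ j < ν, G k j + 1 ≤ F δ := by
    intro δ k hk j hj
    refine le_max_of_le_right ?_
    exact le_ciSup (hFbdd δ) (⟨⟨k, hk⟩, ⟨j, hj⟩⟩ : ↥(Set.Iio δ) × ↥(Set.Iio ν))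
  constructor
  · exact fun δ hδ => hδ.1
  constructor
  · intro β hβ
    obtain ⟨ε, hεΛ, hβε, hεlim, hex, hseqΛ, hseqε⟩ := seq_lemma hΛ F hstep β hβ
    refine ⟨ε, ⟨hεΛ, ?_⟩, hβε⟩
    intro k hk j hj
    obtain ⟨n, hn⟩ := hex k hk
    calc G k j < G k j + 1 := lt_add_one _
      _ ≤ F (F^[n] β) := hFle _ k hn j hj
      _ = F^[n+1] β := (Function.iterate_succ_apply' F n β).symm
      _ < ε := hseqε (n+1)
  · intro β hβ hβlim happrox
    refine ⟨hβ, fun k hk j hj => ?_⟩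
    have hk1 : k + 1 < β := by rw [Ordinal.add_one_eq_succ]; exact hβlim.succ_lt hk
    obtain ⟨δ, hδ, hle, hlt⟩ := happrox (k+1) hk1
    exact (hδ.2 k (lt_of_lt_of_le (lt_add_one k) hle) j hj).trans hlt

/-- A system of surjections onto all ordinals below the successor cardinal. -/
lemma mkSurj (μ : Cardinal.{0}) : ∃ f : Ordinal.{0} → Ordinal.{0} → Ordinal.{0},
      (∀ δ ξ, f δ ξ < δ ∨ f δ ξ = 0) ∧
      (∀ δ < (Order.succ μ).ord, ∀ ζ < δ, ∃ ξ < μ.ord, f δ ξ = ζ) := by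
  have key : ∀ δ : Ordinal.{0}, ∃ g : Ordinal.{0} → Ordinal.{0},
      (∀ ξ, g ξ < δ ∨ g ξ = 0) ∧ (δ < (Order.succ μ).ord → ∀ ζ < δ, ∃ ξ < μ.ord, g ξ = ζ) := by
    intro δ
    by_cases h : δ < (Order.succ μ).ord ∧ 0 < δ
    · have hcard : #(Set.Iio δ) ≤ #(Set.Iio μ.ord) := by
        rw [Ordinal.mk_Iio_ordinal, Ordinal.mk_Iio_ordinal, Cardinal.card_ord]
        exact Cardinal.lift_le.mpr (Order.lt_succ_iff.mp (Cardinal.lt_ord.mp h.1))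
      obtain ⟨emb⟩ := (Cardinal.le_def _ _).mp hcard
      have hne : Nonempty (Set.Iio δ) := ⟨⟨0, h.2⟩⟩
      refine ⟨fun ξ => if hξ : ξ < μ.ord then (Function.invFun emb ⟨ξ, hξ⟩).1 else 0, ?_, ?_⟩
      · intro ξ
        by_cases hξ : ξ < μ.ord
        · left; beta_reduce; rw [dif_pos hξ]; exact (Function.invFun emb ⟨ξ, hξ⟩).2
        · right; beta_reduce; rw [dif_neg hξ]
      · intro _ ζ hζ
        have hξν : (emb ⟨ζ, hζ⟩).1 < μ.ord := (emb ⟨ζ, hζ⟩).2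
        refine ⟨(emb ⟨ζ, hζ⟩).1, hξν, ?_⟩
        beta_reduce
        rw [dif_pos hξν]
        have h4 : (⟨(emb ⟨ζ, hζ⟩).1, hξν⟩ : Set.Iio μ.ord) = emb ⟨ζ, hζ⟩ := rfl
        rw [h4, Function.leftInverse_invFun emb.injective]
    · push_neg at h
      refine ⟨fun _ => 0, fun ξ => Or.inr rfl, ?_⟩
      intro hδ ζ hζ
      exact absurd (h hδ) (not_le.mpr (lt_of_le_of_lt (zero_le (a := ζ)) hζ))
  choose f hf1 hf2 using key
  exact ⟨f, hf1, fun δ hδ => hf2 δ hδ⟩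

end Aux

/-- A disjoint stationary sequence on `μ⁺` implies the failure of the approachability
property `AP_μ`, i.e. `μ⁺ ∉ I[μ⁺]`. -/
theorem stmt10 (μ : Cardinal.{0}) (hreg : μ.IsRegular) (hunc : ℵ₀ < μ)
    (S : Set Ordinal.{0}) (hS : ∀ α ∈ S, α < (Order.succ μ).ord ∧ α.cof = μ)
    (hSstat : StationaryInOrd (Order.succ μ).ord S)
    (𝒮 : Ordinal.{0} → Set (Set Ordinal.{0}))
    (hstat : ∀ α ∈ S, IsStationaryIn (Cardinal.lift.{1} μ) (Set.Iio α) (𝒮 α))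
    (hdisj : ∀ α ∈ S, ∀ β ∈ S, α ≠ β → 𝒮 α ∩ 𝒮 β = ∅) :
    ¬ ∃ (a : Ordinal.{0} → Set Ordinal.{0}) (C : Set Ordinal.{0}),
        (∀ α < (Order.succ μ).ord,
          a α ∈ SmallSets (Cardinal.lift.{1} μ) (Set.Iio (Order.succ μ).ord)) ∧
        ClubInOrd (Order.succ μ).ord C ∧
        ∀ γ ∈ C, ApproachablePt a γ := by
  classical
  rintro ⟨a, C, hsmall, hCclub, happ⟩
  have hμℵ : ℵ₀ ≤ μ := hunc.le
  have hsuccreg : (Order.succ μ).IsRegular := Cardinal.isRegular_succ hμℵ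
  have hΛcof : (Order.succ μ).ord.cof = Order.succ μ := hsuccreg.cof_eq
  have hμsucc : μ < Order.succ μ := Order.lt_succ μ
  have hΛunc : ℵ₀ < (Order.succ μ).ord.cof := by rw [hΛcof]; exact hunc.trans hμsucc
  have hΛlim : Order.IsSuccLimit (Order.succ μ).ord := Ordinal.aleph0_le_cof.mp hΛunc.le
  have hν : μ.ord.card < Order.succ μ := by rw [Cardinal.card_ord]; exact hμsucc
  have hνlim : Order.IsSuccLimit μ.ord := Cardinal.isSuccLimit_ord hμℵ
  have hℵlift : ℵ₀ ≤ Cardinal.lift.{1,0} μ := by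
    rw [← Cardinal.lift_aleph0.{1,0}]; exact Cardinal.lift_le.mpr hμℵ
  obtain ⟨f, hf1, hf2⟩ := mkSurj μ
  set X : Ordinal.{0} → Ordinal.{0} → Set Ordinal.{0} :=
    fun k j => a k ∪ {w | ∃ δ ∈ a k, ∃ ξ < j, w = f δ ξ} with hX
  set G : Ordinal.{0} → Ordinal.{0} → Ordinal.{0} :=
    fun k j => if h : ∃ α, α ∈ S ∧ X k j ∈ 𝒮 α then sInf {α | α ∈ S ∧ X k j ∈ 𝒮 α} else 0
    with hG
  have hGspec : ∀ k j, (∃ α, α ∈ S ∧ X k j ∈ 𝒮 α) →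
      (G k j ∈ S ∧ X k j ∈ 𝒮 (G k j) ∧ ∀ α, α ∈ S → X k j ∈ 𝒮 α → G k j ≤ α) := by
    intro k j h
    have hmem := csInf_mem (s := {α | α ∈ S ∧ X k j ∈ 𝒮 α}) h
    have hGkj : G k j = sInf {α | α ∈ S ∧ X k j ∈ 𝒮 α} := by
      rw [hG]; beta_reduce; rw [dif_pos h]
    rw [hGkj]
    exact ⟨hmem.1, hmem.2, fun α h1 h2 => csInf_le' ⟨h1, h2⟩⟩
  have hGΛ : ∀ k j, G k j < (Order.succ μ).ord := by
    intro k j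
    by_cases h : ∃ α, α ∈ S ∧ X k j ∈ 𝒮 α
    · exact (hS _ (hGspec k j h).1).1
    · have hGkj : G k j = 0 := by rw [hG]; beta_reduce; rw [dif_neg h]
      rw [hGkj]; exact hΛlim.pos
  have hDclub := clubInOrd_closure hsuccreg (hunc.trans hμsucc) μ.ord hν G hGΛ
  obtain ⟨β, hβS, hβCD⟩ := hSstat.2 _ (clubInOrd_inter hΛunc hCclub hDclub)
  have hβC : β ∈ C := hβCD.1
  have hβD := hβCD.2
  obtain ⟨hβΛ, hβcof⟩ := hS β hβS
  have hβlim : Order.IsSuccLimit β := Ordinal.aleph0_le_cof.mp (by rw [hβcof]; exact hμℵ)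
  obtain ⟨E, hEsub, hEunb, hEotp, hEinit⟩ := happ β hβC
  rw [hβcof] at hEotp
  obtain ⟨e, he1, he2, he3⟩ := mkEnum E μ.ord hEotp
  have heβ : ∀ ρ < μ.ord, e ρ < β := fun ρ hρ => hEsub (he1 ρ hρ)
  have hemono : ∀ ρ < μ.ord, ∀ ρ' < μ.ord, ρ ≤ ρ' → e ρ ≤ e ρ' := by
    intro ρ hρ ρ' hρ' hle
    rcases eq_or_lt_of_le hle with rfl | hlt
    · exact le_rfl
    · exact (he2 ρ hρ ρ' hρ' hlt).le
  set x : Ordinal.{0} → Set Ordinal.{0} :=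
    fun ρ => (E ∩ Set.Iio (e ρ)) ∪ {w | ∃ δ ∈ E ∩ Set.Iio (e ρ), ∃ ξ < ρ, w = f δ ξ} with hx
  have hx1 : ∀ ρ < μ.ord, ∀ w ∈ x ρ, w < e ρ := by
    intro ρ hρ w hw
    rcases hw with ⟨_, hlt⟩ | ⟨δ, ⟨hδE, hδlt⟩, ξ, hξ, rfl⟩
    · exact hlt
    · rcases hf1 δ ξ with h | h
      · exact h.trans hδlt
      · rw [h]; exact lt_of_le_of_lt (zero_le (a := δ)) hδlt
  have hxmono : ∀ ρ < μ.ord, ∀ ρ' < μ.ord, ρ ≤ ρ' → x ρ ⊆ x ρ' := by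
    intro ρ hρ ρ' hρ' hle w hw
    rcases hw with ⟨hwE, hlt⟩ | ⟨δ, ⟨hδE, hδlt⟩, ξ, hξ, rfl⟩
    · exact Or.inl ⟨hwE, hlt.trans_le (hemono ρ hρ ρ' hρ' hle)⟩
    · exact Or.inr ⟨δ, ⟨hδE, hδlt.trans_le (hemono ρ hρ ρ' hρ' hle)⟩, ξ, hξ.trans_le hle, rfl⟩
  have hxcode : ∀ ρ < μ.ord, ∃ k < β, x ρ = X k ρ := by
    intro ρ hρ
    obtain ⟨k, hkβ, hk⟩ := hEinit (e ρ) (heβ ρ hρ)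
    refine ⟨k, hkβ, ?_⟩
    rw [hx, hX]
    beta_reduce
    rw [hk]
  have hxsmall : ∀ ρ < μ.ord, x ρ ∈ SmallSets (Cardinal.lift.{1} μ) (Set.Iio β) := by
    intro ρ hρ
    constructor
    · intro w hw; exact (hx1 ρ hρ w hw).trans (heβ ρ hρ)
    · obtain ⟨k, hkβ, hk⟩ := hEinit (e ρ) (heβ ρ hρ)
      have hsk := (hsmall k (hkβ.trans hβΛ)).2
      rw [← hk] at hsk
      apply lt_of_le_of_lt (Cardinal.mk_union_le _ _)
      apply Cardinal.add_lt_of_lt hℵlift hsk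
      have hrange : {w | ∃ δ ∈ E ∩ Set.Iio (e ρ), ∃ ξ < ρ, w = f δ ξ} =
          Set.range (fun p : ↥(E ∩ Set.Iio (e ρ)) × ↥(Set.Iio ρ) => f p.1.1 p.2.1) := by
        ext w
        constructor
        · rintro ⟨δ, hδ, ξ, hξ, rfl⟩; exact ⟨⟨⟨δ, hδ⟩, ⟨ξ, hξ⟩⟩, rfl⟩
        · rintro ⟨⟨⟨δ, hδ⟩, ⟨ξ, hξ⟩⟩, rfl⟩; exact ⟨δ, hδ, ξ, hξ, rfl⟩
      rw [hrange]
      apply lt_of_le_of_lt Cardinal.mk_range_le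
      rw [Cardinal.mk_prod, Cardinal.lift_id, Cardinal.lift_id]
      apply Cardinal.mul_lt_of_lt hℵlift hsk
      rw [Ordinal.mk_Iio_ordinal]
      exact Cardinal.lift_lt.mpr (Cardinal.lt_ord.mp hρ)
  have hcover : ∀ γ < β, ∃ ρ < μ.ord, γ ∈ x ρ := by
    intro γ hγ
    have hγ1 : γ + 1 < β := by rw [Ordinal.add_one_eq_succ]; exact hβlim.succ_lt hγ
    obtain ⟨δ, hδE, hδge⟩ := hEunb (γ+1) hγ1
    have hγδ : γ < δ := lt_of_lt_of_le (lt_add_one γ) hδge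
    obtain ⟨ρ₁, hρ₁, hρ₁e⟩ := he3 δ hδE
    obtain ⟨ξ, hξ, hfξ⟩ := hf2 δ ((hEsub hδE).trans hβΛ) γ hγδ
    have hρ₁1 : ρ₁ + 1 < μ.ord := by rw [Ordinal.add_one_eq_succ]; exact hνlim.succ_lt hρ₁
    have hξ1 : ξ + 1 < μ.ord := by rw [Ordinal.add_one_eq_succ]; exact hνlim.succ_lt hξ
    have hρν : max (ρ₁+1) (ξ+1) < μ.ord := max_lt hρ₁1 hξ1
    refine ⟨max (ρ₁+1) (ξ+1), hρν, Or.inr ⟨δ, ⟨hδE, ?_⟩, ξ, ?_, hfξ.symm⟩⟩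
    · rw [← hρ₁e]
      exact he2 ρ₁ hρ₁ _ hρν (lt_of_lt_of_le (lt_add_one ρ₁) (le_max_left _ _))
    · exact lt_of_lt_of_le (lt_add_one ξ) (le_max_right _ _)
  have hxrev : ∀ ρ < μ.ord, ∀ ρ' < μ.ord, x ρ ⊆ x ρ' → ρ ≤ ρ' := by
    intro ρ hρ ρ' hρ' hsub
    by_contra hlt
    push_neg at hlt
    have he' : e ρ' ∈ x ρ := Or.inl ⟨he1 ρ' hρ', he2 ρ' hρ' ρ hρ hlt⟩
    exact absurd (hx1 ρ' hρ' _ (hsub he')) (lt_irrefl _)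
  set 𝒞 : Set (Set Ordinal.{0}) := {s | ∃ ρ < μ.ord, s = x ρ} with h𝒞
  have hclub : IsClubIn (Cardinal.lift.{1} μ) (Set.Iio β) 𝒞 := by
    refine ⟨?_, ?_, ?_⟩
    · rintro s ⟨ρ, hρ, rfl⟩; exact hxsmall ρ hρ
    · rintro y ⟨hysub, hycard⟩
      have hch : ∀ γ : ↥y, ∃ ρ, ρ < μ.ord ∧ γ.1 ∈ x ρ := by
        intro γ
        obtain ⟨ρ, h1, h2⟩ := hcover γ.1 (hysub γ.2)
        exact ⟨ρ, h1, h2⟩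
      choose r hr1 hr2 using hch
      have hbdd : BddAbove (Set.range r) := ⟨μ.ord, by rintro _ ⟨i, rfl⟩; exact (hr1 i).le⟩
      have hP : (⨆ γ, r γ) < μ.ord := supLt r hreg hycard hr1
      refine ⟨x (⨆ γ, r γ), ⟨_, hP, rfl⟩, ?_⟩
      intro γ hγ
      exact hxmono (r ⟨γ, hγ⟩) (hr1 _) _ hP (le_ciSup hbdd ⟨γ, hγ⟩) (hr2 ⟨γ, hγ⟩)
    · rintro ι inst hne hcard g hgmono hgmem
      haveI := hne
      have hch : ∀ i : ι, ∃ ρ, ρ < μ.ord ∧ g i = x ρ := by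
        intro i
        obtain ⟨ρ, h1, h2⟩ := hgmem i
        exact ⟨ρ, h1, h2⟩
      choose r hr1 hr2 using hch
      have hbdd : BddAbove (Set.range r) := ⟨μ.ord, by rintro _ ⟨i, rfl⟩; exact (hr1 i).le⟩
      have hP : (⨆ i, r i) < μ.ord := supLt r hreg hcard hr1
      refine ⟨⨆ i, r i, hP, ?_⟩
      apply Set.Subset.antisymm
      · apply Set.iUnion_subset
        intro i
        rw [hr2 i]
        exact hxmono (r i) (hr1 i) _ hP (le_ciSup hbdd i)
      · intro w hw
        rcases hw with ⟨hwE, hwlt⟩ | ⟨δ, ⟨hδE, hδlt⟩, ξ, hξ, rfl⟩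
        · obtain ⟨ρ₁, hρ₁, hρ₁e⟩ := he3 w hwE
          have hwlt' : w < e (⨆ i, r i) := hwlt
          have hρ₁P : ρ₁ < ⨆ i, r i := by
            by_contra hcon
            push_neg at hcon
            have h5 : e (⨆ i, r i) ≤ e ρ₁ := hemono _ hP _ hρ₁ hcon
            rw [hρ₁e] at h5
            exact absurd (lt_of_lt_of_le hwlt' h5) (lt_irrefl w)
          obtain ⟨i, hi⟩ := (lt_ciSup_iff hbdd).mp hρ₁P
          refine Set.mem_iUnion.mpr ⟨i, ?_⟩
          rw [hr2 i]
          exact Or.inl ⟨hwE, by rw [← hρ₁e]; exact he2 ρ₁ hρ₁ _ (hr1 i) hi⟩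
        · obtain ⟨ρ₁, hρ₁, hρ₁e⟩ := he3 δ hδE
          have hδlt' : δ < e (⨆ i, r i) := hδlt
          have hρ₁P : ρ₁ < ⨆ i, r i := by
            by_contra hcon
            push_neg at hcon
            have h5 : e (⨆ i, r i) ≤ e ρ₁ := hemono _ hP _ hρ₁ hcon
            rw [hρ₁e] at h5
            exact absurd (lt_of_lt_of_le hδlt' h5) (lt_irrefl δ)
          obtain ⟨i₁, hi₁⟩ := (lt_ciSup_iff hbdd).mp hρ₁P
          obtain ⟨i₂, hi₂⟩ := (lt_ciSup_iff hbdd).mp hξ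
          rcases le_total i₁ i₂ with hile | hile
          · have hr12 : r i₁ ≤ r i₂ := by
              apply hxrev (r i₁) (hr1 i₁) (r i₂) (hr1 i₂)
              rw [← hr2 i₁, ← hr2 i₂]
              exact hgmono hile
            refine Set.mem_iUnion.mpr ⟨i₂, ?_⟩
            rw [hr2 i₂]
            refine Or.inr ⟨δ, ⟨hδE, ?_⟩, ξ, hi₂, rfl⟩
            rw [← hρ₁e]
            exact (he2 ρ₁ hρ₁ _ (hr1 i₁) hi₁).trans_le (hemono _ (hr1 i₁) _ (hr1 i₂) hr12)
          · have hr12 : r i₂ ≤ r i₁ := by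
              apply hxrev (r i₂) (hr1 i₂) (r i₁) (hr1 i₁)
              rw [← hr2 i₁, ← hr2 i₂]
              exact hgmono hile
            refine Set.mem_iUnion.mpr ⟨i₁, ?_⟩
            rw [hr2 i₁]
            refine Or.inr ⟨δ, ⟨hδE, ?_⟩, ξ, hi₂.trans_le hr12, rfl⟩
            rw [← hρ₁e]
            exact he2 ρ₁ hρ₁ _ (hr1 i₁) hi₁
  obtain ⟨z, hz𝒮, hz𝒞⟩ := (hstat β hβS).2 𝒞 hclub
  obtain ⟨ρ, hρν, hzx⟩ := hz𝒞
  obtain ⟨k, hkβ, hkX⟩ := hxcode ρ hρν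
  have hzX : X k ρ ∈ 𝒮 β := by rw [← hkX, ← hzx]; exact hz𝒮
  have hGs := hGspec k ρ ⟨β, hβS, hzX⟩
  have hGβ : G k ρ < β := hβD.2 k hkβ ρ hρν
  have hd := hdisj (G k ρ) hGs.1 β hβS (ne_of_lt hGβ)
  have : X k ρ ∈ 𝒮 (G k ρ) ∩ 𝒮 β := ⟨hGs.2.1, hzX⟩
  rw [hd] at this
  exact this
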